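/- Let A be a complex Banach algebra (a complete normed unital ring which is a normed algebra over ℂ) and let u, x ∈ A satisfy u·x − x·u = x. Then exp(2πi·u)·x = x·exp(2πi·u), where exp denotes the analytic exponential given by the everywhere-convergent series exp(y) = ∑_{n≥0} yⁿ/n! and i is the imaginary unit. -/

import Mathlib

open NormedSpace Nat

lemma exp_apply_eq_tsum {A : Type*} [NormedRing A] [NormedAlgebra ℂ A] [CompleteSpace A]
    (T : A →L[ℂ] A) (y : A) :
    NormedSpace.exp T y = ∑' n : ℕ, ((n ! : ℂ)⁻¹) • (T ^ n) y := by
  have := NormedSpace.exp_eq_tsum (𝕂 := ℂ) (𝔸 := A →L[ℂ] A)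
  rw [this]
  have hs : Summable fun n : ℕ => ((n ! : ℂ)⁻¹) • T ^ n :=
    NormedSpace.expSeries_summable' (𝕂 := ℂ) T
  simpa using ((ContinuousLinearMap.apply ℂ A y).map_tsum hs)

/-- In a complex Banach algebra, if `ux - xu = x` then `exp(2πi u)` commutes with `x`. -/
theorem stmt_14 {A : Type*} [NormedRing A] [NormedAlgebra ℂ A] [CompleteSpace A]
    (u x : A) (h : u * x - x * u = x) :
    NormedSpace.exp (((2 * Real.pi : ℂ) * Complex.I) • u) * x
      = x * NormedSpace.exp (((2 * Real.pi : ℂ) * Complex.I) • u) := by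
  set c : ℂ := (2 * Real.pi : ℂ) * Complex.I with hc
  set L : A →L[ℂ] A := ContinuousLinearMap.mul ℂ A u with hL
  set R : A →L[ℂ] A := (ContinuousLinearMap.mul ℂ A).flip u with hR
  have hLapp : ∀ y, L y = u * y := fun y => rfl
  have hRapp : ∀ y, R y = y * u := fun y => rfl
  -- Powers of c•L applied
  have hLpow : ∀ n (y : A), ((c • L) ^ n) y = (c • u) ^ n * y := by
    intro n
    induction n with
    | zero => intro y; simp
    | succ n ih =>
      intro y
      rw [pow_succ, pow_succ]
      show ((c • L) ^ n) ((c • L) y) = (c • u) ^ n * (c • u) * y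
      have hy : (c • L) y = (c • u) * y := by
        show c • (u * y) = (c • u) * y; rw [smul_mul_assoc]
      rw [hy, ih, ← mul_assoc]
  have hRpow : ∀ n (y : A), (((-c) • R) ^ n) y = y * ((-c) • u) ^ n := by
    intro n
    induction n with
    | zero => intro y; simp
    | succ n ih =>
      intro y
      rw [pow_succ, pow_succ]
      show ((((-c) • R) ^ n) (((-c) • R) y)) = y * (((-c) • u) ^ n * ((-c) • u))
      have : ((-c) • R) y = y * ((-c) • u) := by
        show (-c) • (y * u) = y * ((-c) • u); rw [mul_smul_comm]
      rw [this, ih, mul_assoc, pow_mul_comm']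
  -- exp (c•L) y = exp(c•u) * y
  have hexpL : ∀ y : A, NormedSpace.exp (c • L) y = NormedSpace.exp (c • u) * y := by
    intro y
    rw [exp_apply_eq_tsum]
    have hs : Summable fun n : ℕ => ((n ! : ℂ)⁻¹) • (c • u) ^ n :=
      NormedSpace.expSeries_summable' (𝕂 := ℂ) (c • u)
    rw [NormedSpace.exp_eq_tsum ℂ]
    have := (((ContinuousLinearMap.mul ℂ A).flip y).map_tsum hs)
    simp only [ContinuousLinearMap.flip_apply, ContinuousLinearMap.mul_apply'] at this
    rw [this]
    congr 1; ext n
    rw [hLpow, smul_mul_assoc]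
  have hexpR : ∀ y : A, NormedSpace.exp ((-c) • R) y = y * NormedSpace.exp ((-c) • u) := by
    intro y
    rw [exp_apply_eq_tsum]
    have hs : Summable fun n : ℕ => ((n ! : ℂ)⁻¹) • ((-c) • u) ^ n :=
      NormedSpace.expSeries_summable' (𝕂 := ℂ) ((-c) • u)
    rw [NormedSpace.exp_eq_tsum ℂ]
    have := ((ContinuousLinearMap.mul ℂ A y).map_tsum hs)
    simp only [ContinuousLinearMap.mul_apply'] at this
    rw [this]
    congr 1; ext n
    rw [hRpow, mul_smul_comm]
  -- L and R commute
  have hcomm : Commute (c • L) ((-c) • R) := by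
    show _ = _
    ext y
    show (c • L) (((-c) • R) y) = ((-c) • R) ((c • L) y)
    show c • (u * ((-c) • (y * u))) = (-c) • (c • (u * y) * u)
    rw [mul_smul_comm, smul_smul, smul_mul_assoc, smul_smul, mul_assoc u]
    congr 1
    ring
  -- D := c•L + (-c)•R = c • (L - R), and (L-R) x = x
  have hDx : (c • L + (-c) • R) x = c • x := by
    have h0 : (c • L + (-c) • R) x = c • (u * x) + (-c) • (x * u) := rfl
    rw [h0, neg_smul, ← sub_eq_add_neg, ← smul_sub, h]
  have hDpow : ∀ n, ((c • L + (-c) • R) ^ n) x = c ^ n • x := by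
    intro n
    induction n with
    | zero => simp
    | succ n ih =>
      rw [pow_succ]
      show ((c • L + (-c) • R) ^ n) ((c • L + (-c) • R) x) = c ^ (n+1) • x
      rw [hDx, map_smul, ih, smul_smul, pow_succ, mul_comm]
  have hDexp : NormedSpace.exp (c • L + (-c) • R) x = Complex.exp c • x := by
    rw [exp_apply_eq_tsum]
    have : (fun n : ℕ => ((n ! : ℂ)⁻¹) • ((c • L + (-c) • R) ^ n) x)
        = fun n : ℕ => (((n ! : ℂ)⁻¹) * c ^ n) • x := by
      ext n; rw [hDpow, smul_smul]
    rw [this]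
    rw [Complex.exp_eq_exp_ℂ, NormedSpace.exp_eq_tsum ℂ]
    have hs : Summable fun n : ℕ => ((n ! : ℂ)⁻¹) • c ^ n :=
      NormedSpace.expSeries_summable' (𝕂 := ℂ) c
    rw [← Summable.tsum_smul_const hs]
    exact tsum_congr fun n => by rw [smul_eq_mul]
  -- combine
  have key : NormedSpace.exp (c • u) * (x * NormedSpace.exp ((-c) • u)) = x := by
    letI : NormedAlgebra ℚ (A →L[ℂ] A) := NormedAlgebra.restrictScalars ℚ ℂ (A →L[ℂ] A)
    have h1 : NormedSpace.exp (c • L + (-c) • R)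
        = NormedSpace.exp (c • L) * NormedSpace.exp ((-c) • R) :=
      NormedSpace.exp_add_of_commute hcomm
    have h2 := congrArg (fun T : A →L[ℂ] A => T x) h1
    simp only [ContinuousLinearMap.mul_apply] at h2
    rw [hDexp, hexpR, hexpL] at h2
    rw [← h2, hc, Complex.exp_two_pi_mul_I, one_smul]
  have hinv : NormedSpace.exp ((-c) • u) * NormedSpace.exp (c • u) = 1 := by
    letI : NormedAlgebra ℚ A := NormedAlgebra.restrictScalars ℚ ℂ A
    rw [← NormedSpace.exp_add_of_commute]
    · rw [← add_smul, neg_add_cancel, zero_smul, NormedSpace.exp_zero]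
    · exact Commute.smul_left (Commute.smul_right (Commute.refl u) c) (-c)
  calc NormedSpace.exp (c • u) * x
      = NormedSpace.exp (c • u) * (x * NormedSpace.exp ((-c) • u))
          * NormedSpace.exp (c • u) := by
        rw [mul_assoc, mul_assoc, hinv, mul_one]
    _ = x * NormedSpace.exp (c • u) := by rw [key]
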